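/- Let d ≥ 1, T > 0, and let p', q' ∈ (1, ∞) satisfy d/p' + 2/q' < 2. Then there exists a constant C > 0, depending only on T, d, p', q', such that for every Borel measurable function f : [0,T] × ℝ^d → [0, ∞) one has ∫_0^T (2πs)^{−d/2} ∫_{ℝ^d} f(s,z) e^{−|z|^2/(2s)} dz ds ≤ C · ( ∫_0^T ( ∫_{ℝ^d} f(s,z)^{p'} dz )^{q'/p'} ds )^{1/q'}. -/

import Mathlib

open MeasureTheory ProbabilityTheory Filter
open Real Set
open scoped ENNReal NNReal Topology

noncomputable section

/-- `Euc d` is `ℝ^d` with the Euclidean norm. -/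
abbrev Euc (d : ℕ) := EuclideanSpace ℝ (Fin d)

/-- `B` is a `d`-dimensional Brownian motion on `[0,T]` with respect to `μ`:
continuous paths, `B 0 = 0`, and for any monotone family of times in `[0,T]` the
coordinates of the increments are independent, each increment coordinate being
a centered Gaussian of variance `t - s`. -/
def IsBrownianMotion {Ω : Type*} [MeasurableSpace Ω] (μ : Measure Ω) (d : ℕ) (T : ℝ)
    (B : ℝ → Ω → Euc d) : Prop :=
  (∀ ω, ContinuousOn (fun t => B t ω) (Set.Icc 0 T)) ∧
  (∀ ω, B 0 ω = 0) ∧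
  (∀ t, Measurable (B t)) ∧
  (∀ (n : ℕ) (t : Fin (n + 1) → ℝ), Monotone t → (∀ i, t i ∈ Set.Icc (0 : ℝ) T) →
    iIndepFun
      (fun p : Fin n × Fin d => fun ω =>
        (B (t p.1.succ) ω - B (t p.1.castSucc) ω) p.2) μ) ∧
  (∀ s t : ℝ, 0 ≤ s → s ≤ t → t ≤ T → ∀ i : Fin d,
    μ.map (fun ω => (B t ω - B s ω) i) = gaussianReal 0 (Real.toNNReal (t - s)))

/-- The mixed norm `‖f‖_{L^q_p}` (as an extended nonnegative real). -/
def mixedNorm (d : ℕ) (T p q : ℝ) (f : ℝ → Euc d → Euc d) : ℝ≥0∞ :=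
  (∫⁻ t in Set.Ioc (0 : ℝ) T,
      (∫⁻ x : Euc d, ENNReal.ofReal (‖f t x‖ ^ p)) ^ (q / p)) ^ (1 / q)

/-- The `μ`-augmented natural filtration of `B` at time `t`. -/
def augFiltration {Ω : Type*} [MeasurableSpace Ω] (μ : Measure Ω) {d : ℕ}
    (B : ℝ → Ω → Euc d) (t : ℝ) : MeasurableSpace Ω :=
  (⨆ s ∈ Set.Icc (0 : ℝ) t, MeasurableSpace.comap (B s) inferInstance) ⊔
    MeasurableSpace.generateFrom {N : Set Ω | μ N = 0}

/-- `X` is a strong solution of `dX_t = b(t, X_t) dt + dB_t`, `X_0 = x`, on `[0,T]`: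
a continuous process, adapted to the `μ`-augmented natural filtration of `B`, such that
a.s. `∫_0^T |b(s,X_s)| ds < ∞` and `X_t = x + ∫_0^t b(s,X_s) ds + B_t` for all `t ∈ [0,T]`. -/
def IsStrongSolution {Ω : Type*} [MeasurableSpace Ω] (μ : Measure Ω) {d : ℕ} (T : ℝ)
    (B : ℝ → Ω → Euc d) (b : ℝ → Euc d → Euc d) (x : Euc d) (X : ℝ → Ω → Euc d) : Prop :=
  (∀ ω, ContinuousOn (fun t => X t ω) (Set.Icc 0 T)) ∧
  (∀ t ∈ Set.Icc (0 : ℝ) T, Measurable[augFiltration μ B t] (X t)) ∧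
  (∀ᵐ ω ∂μ, IntegrableOn (fun s => b s (X s ω)) (Set.Icc 0 T) ∧
    ∀ t ∈ Set.Icc (0 : ℝ) T,
      X t ω = x + (∫ s in Set.Icc (0 : ℝ) t, b s (X s ω)) + B t ω)

lemma gauss_lintegral (d : ℕ) {b : ℝ} (hb : 0 < b) :
    ∫⁻ v : Euc d, ENNReal.ofReal (rexp (-b * ‖v‖ ^ 2))
      = ENNReal.ofReal ((π / b) ^ ((d : ℝ) / 2)) := by
  have hint : Integrable (fun v : Euc d => rexp (-b * ‖v‖ ^ 2)) := by
    have h := (GaussianFourier.integrable_cexp_neg_mul_sq_norm_add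
      (V := Euc d) (b := (b : ℂ)) (by simpa using hb) 0 0).norm
    refine h.congr (Filter.Eventually.of_forall fun v => ?_)
    simp [Complex.norm_exp]
    left; norm_cast
  rw [← MeasureTheory.ofReal_integral_eq_lintegral_ofReal hint
    (Filter.Eventually.of_forall fun v => (Real.exp_pos _).le)]
  congr 1
  rw [GaussianFourier.integral_rexp_neg_mul_sq_norm hb]
  simp


/-- the time-integrated heat-kernel integral of a nonnegative
measurable `f` is bounded by a constant times its mixed `L^{q'}_{p'}` norm,
whenever `p', q' ∈ (1,∞)` satisfy `d/p' + 2/q' < 2`. -/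
theorem heat_kernel_mixed_norm_bound
    (d : ℕ) (hd : 1 ≤ d) (T : ℝ) (hT : 0 < T)
    (p' q' : ℝ) (hp : 1 < p') (hq : 1 < q') (hpq : (d : ℝ) / p' + 2 / q' < 2) :
    ∃ C : ℝ, 0 < C ∧
      ∀ f : ℝ → Euc d → ℝ, Measurable (Function.uncurry f) →
        (∀ s z, 0 ≤ f s z) →
        ∫⁻ s in Set.Ioc (0 : ℝ) T, ∫⁻ z : Euc d,
            ENNReal.ofReal
              ((2 * Real.pi * s) ^ (-(d : ℝ) / 2) * f s z *
                Real.exp (-‖z‖ ^ 2 / (2 * s)))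
          ≤ ENNReal.ofReal C *
            (∫⁻ s in Set.Ioc (0 : ℝ) T,
                (∫⁻ z : Euc d, ENNReal.ofReal (f s z ^ p')) ^ (q' / p')) ^ (1 / q') := by
  -- conjugate exponents
  have hpp' : p'.HolderConjugate (Real.conjExponent p') := Real.HolderConjugate.conjExponent hp
  have hqq' : q'.HolderConjugate (Real.conjExponent q') := Real.HolderConjugate.conjExponent hq
  set p : ℝ := Real.conjExponent p' with hpdef
  set q : ℝ := Real.conjExponent q' with hqdef
  have hp0 : 0 < p := hpp'.symm.pos
  have hq0 : 0 < q := hqq'.symm.pos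
  have hp'0 : 0 < p' := hpp'.pos
  have hq'0 : 0 < q' := hqq'.pos
  set β : ℝ := (d : ℝ) / (2 * p') with hβdef
  have hd0 : (0 : ℝ) < d := by exact_mod_cast hd
  have hβ0 : 0 < β := by positivity
  have hβq : β * q < 1 := by
    have h1 : 1 / q' + 1 / q = 1 := by
      simpa [one_div] using hqq'.inv_add_inv_eq_one
    have hβlt : β < 1 / q := by
      have h2 : (d : ℝ) / p' < 2 - 2 * (1 / q') := by
        have : (2:ℝ) / q' = 2 * (1 / q') := by ring
        linarith [hpq, this.symm.trans_le (le_refl _)]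
      have h3 : β = ((d : ℝ) / p') / 2 := by rw [hβdef]; ring
      rw [h3]
      have h4 : 1 / q = 1 - 1 / q' := by linarith
      rw [h4]; linarith
    calc β * q < (1 / q) * q := mul_lt_mul_of_pos_right hβlt hq0
    _ = 1 := by field_simp
  -- the kernel constant
  set c0 : ℝ := (2 * π) ^ (-(d : ℝ) * p / 2) * ((2 * π) / p) ^ ((d : ℝ) / 2) with hc0def
  have hc0 : 0 < c0 := by positivity
  set c1 : ℝ := c0 ^ (1 / p) with hc1def
  have hc1 : 0 < c1 := by positivity
  set G : ℝ → ℝ≥0∞ := fun s => ENNReal.ofReal (c1 * s ^ (-β)) with hGdef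
  have hGmeas : Measurable G :=
    (measurable_const.mul (measurable_id.pow_const (-β))).ennreal_ofReal
  -- real kernel constant computation
  have hreal : ∀ s : ℝ, 0 < s →
      ((2 * π * s) ^ (-(d : ℝ) * p / 2) * (π / (p / (2 * s))) ^ ((d : ℝ) / 2)) ^ (1 / p)
        = c1 * s ^ (-β) := by
    intro s hs
    have h2π : (0 : ℝ) < 2 * π := by positivity
    have e1 : π / (p / (2 * s)) = (2 * π / p) * s := by
      field_simp
    rw [e1, show (2 * π * s) = (2 * π) * s from by ring,
      Real.mul_rpow h2π.le hs.le, Real.mul_rpow (by positivity) hs.le,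
      show (2 * π) ^ (-(d : ℝ) * p / 2) * s ^ (-(d : ℝ) * p / 2)
          * ((2 * π / p) ^ ((d : ℝ) / 2) * s ^ ((d : ℝ) / 2))
        = c0 * (s ^ (-(d : ℝ) * p / 2) * s ^ ((d : ℝ) / 2)) from by rw [hc0def]; ring,
      ← Real.rpow_add hs,
      Real.mul_rpow hc0.le (Real.rpow_nonneg hs.le _),
      ← Real.rpow_mul hs.le, ← hc1def]
    congr 1
    congr 1
    have hconj : 1 / p' + 1 / p = 1 := by
      simpa [one_div] using hpp'.inv_add_inv_eq_one
    have hp1 : (1:ℝ)/p = 1 - 1/p' := by linarith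
    have he1 : (-(d:ℝ) * p / 2 + (d:ℝ) / 2) * (1 / p)
        = -(d:ℝ)/2 + ((d:ℝ)/2) * (1/p) := by
      field_simp
    rw [he1, hp1, hβdef]
    field_simp
    ring
  -- kernel Lp norm computation
  have hker : ∀ s : ℝ, 0 < s →
      (∫⁻ z : Euc d, (ENNReal.ofReal
        ((2 * π * s) ^ (-(d : ℝ) / 2) * rexp (-‖z‖ ^ 2 / (2 * s)))) ^ p) ^ (1 / p) = G s := by
    intro s hs
    have h2πs : (0 : ℝ) < 2 * π * s := by positivity
    have hb : (0 : ℝ) < p / (2 * s) := by positivity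
    have step1 : ∀ z : Euc d,
        (ENNReal.ofReal ((2 * π * s) ^ (-(d : ℝ) / 2) * rexp (-‖z‖ ^ 2 / (2 * s)))) ^ p
          = ENNReal.ofReal ((2 * π * s) ^ (-(d : ℝ) * p / 2))
              * ENNReal.ofReal (rexp (-(p / (2 * s)) * ‖z‖ ^ 2)) := by
      intro z
      rw [ENNReal.ofReal_rpow_of_nonneg (by positivity) hp0.le,
        ← ENNReal.ofReal_mul (by positivity)]
      congr 1
      rw [Real.mul_rpow (by positivity) (Real.exp_pos _).le,
        ← Real.exp_mul, ← Real.rpow_mul h2πs.le]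
      congr 1
      · congr 1; ring
      · congr 1; ring
    simp_rw [step1]
    rw [lintegral_const_mul' _ _ ENNReal.ofReal_ne_top, gauss_lintegral d hb,
      ← ENNReal.ofReal_mul (by positivity),
      ENNReal.ofReal_rpow_of_nonneg (by positivity) (by positivity),
      hreal s hs, hGdef]
  -- time integral of G^q is finite
  have hGq : ∀ s ∈ Set.Ioc (0 : ℝ) T, (G s) ^ q = ENNReal.ofReal (c1 ^ q * s ^ (-(β * q))) := by
    intro s hs
    rw [hGdef]
    rw [ENNReal.ofReal_rpow_of_nonneg
      (mul_nonneg hc1.le (Real.rpow_nonneg hs.1.le _)) hq0.le]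
    congr 1
    rw [Real.mul_rpow hc1.le (Real.rpow_nonneg hs.1.le _), ← Real.rpow_mul hs.1.le]
    congr 1
    ring
  have hint : IntegrableOn (fun s : ℝ => c1 ^ q * s ^ (-(β * q))) (Set.Ioc 0 T) := by
    have h := intervalIntegral.intervalIntegrable_rpow' (a := 0) (b := T)
      (r := -(β * q)) (by linarith)
    rw [intervalIntegrable_iff_integrableOn_Ioc_of_le hT.le] at h
    exact h.const_mul _
  have hJ : (∫⁻ s in Set.Ioc (0 : ℝ) T, (G s) ^ q) ≠ ⊤ := by
    rw [setLIntegral_congr_fun measurableSet_Ioc hGq,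
      ← MeasureTheory.ofReal_integral_eq_lintegral_ofReal hint ?_]
    · exact ENNReal.ofReal_ne_top
    · filter_upwards [self_mem_ae_restrict measurableSet_Ioc] with s hs
      have : (0:ℝ) < s ^ (-(β * q)) := Real.rpow_pos_of_pos hs.1 _
      positivity
  -- the constant
  set E : ℝ≥0∞ := (∫⁻ s in Set.Ioc (0 : ℝ) T, (G s) ^ q) ^ (1 / q) with hEdef
  have hE : E ≠ ⊤ := by
    rw [hEdef]
    exact (ENNReal.rpow_lt_top_of_nonneg (by positivity) hJ).ne
  refine ⟨E.toReal + 1, by positivity, ?_⟩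
  have hCE : E ≤ ENNReal.ofReal (E.toReal + 1) := by
    calc E = ENNReal.ofReal E.toReal := (ENNReal.ofReal_toReal hE).symm
    _ ≤ _ := ENNReal.ofReal_le_ofReal (by linarith)
  intro f hf hf0
  -- mixed norm pieces
  set F : ℝ → ℝ≥0∞ := fun s => (∫⁻ z : Euc d, ENNReal.ofReal (f s z ^ p')) ^ (1 / p')
    with hFdef
  have hFmeas : Measurable F := by
    apply Measurable.pow_const
    apply Measurable.lintegral_prod_right' (f := fun sz : ℝ × Euc d =>
      ENNReal.ofReal (f sz.1 sz.2 ^ p'))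
    exact (hf.pow_const p').ennreal_ofReal
  -- pointwise (in s) Hölder bound
  have hstep : ∀ s ∈ Set.Ioc (0 : ℝ) T,
      (∫⁻ z : Euc d, ENNReal.ofReal
        ((2 * π * s) ^ (-(d : ℝ) / 2) * f s z * rexp (-‖z‖ ^ 2 / (2 * s))))
        ≤ G s * F s := by
    intro s hs
    have hrw : ∀ z : Euc d,
        ENNReal.ofReal ((2 * π * s) ^ (-(d : ℝ) / 2) * f s z * rexp (-‖z‖ ^ 2 / (2 * s)))
          = ENNReal.ofReal ((2 * π * s) ^ (-(d : ℝ) / 2) * rexp (-‖z‖ ^ 2 / (2 * s)))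
            * ENNReal.ofReal (f s z) := by
      intro z
      rw [← ENNReal.ofReal_mul
        (mul_nonneg (Real.rpow_nonneg (mul_nonneg (by positivity : (0:ℝ) ≤ 2 * π) hs.1.le) _)
          (Real.exp_pos _).le)]
      congr 1
      ring
    simp_rw [hrw]
    have hkmeas : Measurable (fun z : Euc d =>
        ENNReal.ofReal ((2 * π * s) ^ (-(d : ℝ) / 2) * rexp (-‖z‖ ^ 2 / (2 * s)))) := by
      apply Measurable.ennreal_ofReal
      exact (continuous_const.mul
        (((continuous_norm.pow 2).neg.div_const _).rexp)).measurable
    have hfmeas : Measurable (fun z : Euc d => ENNReal.ofReal (f s z)) :=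
      (hf.of_uncurry_left).ennreal_ofReal
    calc ∫⁻ z : Euc d,
        ENNReal.ofReal ((2 * π * s) ^ (-(d : ℝ) / 2) * rexp (-‖z‖ ^ 2 / (2 * s)))
          * ENNReal.ofReal (f s z)
        ≤ (∫⁻ z : Euc d, (ENNReal.ofReal
            ((2 * π * s) ^ (-(d : ℝ) / 2) * rexp (-‖z‖ ^ 2 / (2 * s)))) ^ p) ^ (1 / p)
          * (∫⁻ z : Euc d, (ENNReal.ofReal (f s z)) ^ p') ^ (1 / p') :=
        ENNReal.lintegral_mul_le_Lp_mul_Lq volume hpp'.symm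
          hkmeas.aemeasurable hfmeas.aemeasurable
    _ = G s * F s := by
        rw [hker s hs.1, hFdef]
        congr 2
        exact lintegral_congr fun z => ENNReal.ofReal_rpow_of_nonneg (hf0 s z) hp'0.le
  -- assemble
  calc ∫⁻ s in Set.Ioc (0 : ℝ) T, ∫⁻ z : Euc d,
        ENNReal.ofReal ((2 * π * s) ^ (-(d : ℝ) / 2) * f s z * rexp (-‖z‖ ^ 2 / (2 * s)))
      ≤ ∫⁻ s in Set.Ioc (0 : ℝ) T, G s * F s :=
      setLIntegral_mono' measurableSet_Ioc hstep
  _ ≤ (∫⁻ s in Set.Ioc (0 : ℝ) T, (G s) ^ q) ^ (1 / q)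
      * (∫⁻ s in Set.Ioc (0 : ℝ) T, (F s) ^ q') ^ (1 / q') :=
      ENNReal.lintegral_mul_le_Lp_mul_Lq _ hqq'.symm
        hGmeas.aemeasurable hFmeas.aemeasurable
  _ ≤ ENNReal.ofReal (E.toReal + 1)
      * (∫⁻ s in Set.Ioc (0 : ℝ) T,
          (∫⁻ z : Euc d, ENNReal.ofReal (f s z ^ p')) ^ (q' / p')) ^ (1 / q') := by
      apply mul_le_mul' hCE
      apply ENNReal.rpow_le_rpow _ (by positivity)
      apply lintegral_mono
      intro s
      dsimp only
      rw [← ENNReal.rpow_mul, one_div_mul_eq_div]
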